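/- Let p be prime and n ≥ 2. In H(K // K_0(p^n)) define Y_r = 1 + Σ_{j=r}^{n-1} V_j for 1 ≤ r ≤ n-1 and Y_n = 1, where V_j is the characteristic function of K_0(p^n) y(p^j) K_0(p^n). Then Y_{n-r} * Y_{n-r} = p^r Y_{n-r} for all 0 ≤ r ≤ n-1, and Y_r * Y_l = p^{n-r} Y_l = Y_l * Y_r whenever r ≥ l. -/

import Mathlib

open Matrix MeasureTheory

/-- `K₀(pⁿ)` inside `K = GL₂(ℤ_p)`. -/
def K0Z (p : ℕ) [Fact p.Prime] (n : ℕ) : Set (Matrix (Fin 2) (Fin 2) ℤ_[p]) :=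
  {g | IsUnit g.det ∧ (p : ℤ_[p]) ^ n ∣ g 1 0}

/-- The double coset `K₀ g K₀`. -/
def dCosetZ (p : ℕ) [Fact p.Prime] (K : Set (Matrix (Fin 2) (Fin 2) ℤ_[p]))
    (g : Matrix (Fin 2) (Fin 2) ℤ_[p]) : Set (Matrix (Fin 2) (Fin 2) ℤ_[p]) :=
  {m | ∃ k1 ∈ K, ∃ k2 ∈ K, m = k1 * g * k2}

/-- `V_j`: the characteristic function of `K₀(pⁿ) y(p^j) K₀(pⁿ)`. -/
noncomputable def Vfun (p : ℕ) [Fact p.Prime] (n j : ℕ) :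
    Matrix (Fin 2) (Fin 2) ℤ_[p] → ℂ :=
  Set.indicator (dCosetZ p (K0Z p n) !![1, 0; (p : ℤ_[p]) ^ j, 1]) (fun _ => (1 : ℂ))

/-- `U₀`: the characteristic function of `K₀(pⁿ) w(1) K₀(pⁿ)`. -/
noncomputable def U0fun (p : ℕ) [Fact p.Prime] (n : ℕ) :
    Matrix (Fin 2) (Fin 2) ℤ_[p] → ℂ :=
  Set.indicator (dCosetZ p (K0Z p n) !![0, -1; 1, 0]) (fun _ => (1 : ℂ))

/-- The unit `1` of the Hecke algebra: the characteristic function of `K₀(pⁿ)`. -/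
noncomputable def onefun (p : ℕ) [Fact p.Prime] (n : ℕ) :
    Matrix (Fin 2) (Fin 2) ℤ_[p] → ℂ :=
  Set.indicator (K0Z p n) (fun _ => (1 : ℂ))

/-- `Y_r = 1 + Σ_{j=r}^{n-1} V_j` (so `Y_n = 1`). -/
noncomputable def Yfun (p : ℕ) [Fact p.Prime] (n r : ℕ) :
    Matrix (Fin 2) (Fin 2) ℤ_[p] → ℂ :=
  fun h => onefun p n h + ∑ j ∈ Finset.Icc r (n - 1), Vfun p n j h

/-- Convolution with respect to the measure `μ` (Haar measure of `K`,
normalized so that `μ(K₀(pⁿ)) = 1`). -/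
noncomputable def convZ (p : ℕ) [Fact p.Prime]
    [MeasurableSpace (Matrix (Fin 2) (Fin 2) ℤ_[p])]
    (μ : Measure (Matrix (Fin 2) (Fin 2) ℤ_[p]))
    (f1 f2 : Matrix (Fin 2) (Fin 2) ℤ_[p] → ℂ) :
    Matrix (Fin 2) (Fin 2) ℤ_[p] → ℂ :=
  fun h => ∫ g, f1 g * f2 (g⁻¹ * h) ∂μ

/-- Hypotheses making `μ` the normalized Haar measure of `K = GL₂(ℤ_p)`
(extended by zero to all matrices). -/
structure IsHaarK (p : ℕ) [Fact p.Prime] (n : ℕ)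
    [MeasurableSpace (Matrix (Fin 2) (Fin 2) ℤ_[p])]
    (μ : Measure (Matrix (Fin 2) (Fin 2) ℤ_[p])) : Prop where
  normal : μ (K0Z p n) = 1
  supp : μ {g : Matrix (Fin 2) (Fin 2) ℤ_[p] | ¬ IsUnit g.det} = 0
  left_inv : ∀ a : Matrix (Fin 2) (Fin 2) ℤ_[p], IsUnit a.det →
    Measure.map (fun g => a * g) μ = μ
  right_inv : ∀ a : Matrix (Fin 2) (Fin 2) ℤ_[p], IsUnit a.det →
    Measure.map (fun g => g * a) μ = μ

section
variable (p : ℕ) [Fact p.Prime]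

lemma pdvd_iff (m : ℕ) (x : ℤ_[p]) : (p:ℤ_[p])^m ∣ x ↔ ‖x‖ ≤ (p:ℝ)^(-(m:ℤ)) := by
  rw [PadicInt.norm_le_pow_iff_mem_span_pow, Ideal.mem_span_singleton]

lemma unit_iff_not_dvd (x : ℤ_[p]) : IsUnit x ↔ ¬ (p:ℤ_[p]) ∣ x := by
  rw [PadicInt.isUnit_iff, ← PadicInt.norm_lt_one_iff_dvd, not_lt]
  constructor
  · intro h; exact le_of_eq h.symm
  · intro h; exact le_antisymm (PadicInt.norm_le_one x) h

lemma K0Z_subset {m k : ℕ} (h : m ≤ k) : K0Z p k ⊆ K0Z p m := by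
  rintro g ⟨h1, h2⟩
  exact ⟨h1, dvd_trans (pow_dvd_pow _ h) h2⟩

lemma entry_mul (g h : Matrix (Fin 2) (Fin 2) ℤ_[p]) (i j : Fin 2) :
    (g * h) i j = g i 0 * h 0 j + g i 1 * h 1 j := by
  rw [Matrix.mul_apply, Fin.sum_univ_two]

lemma K0Z_mul {m : ℕ} {g h : Matrix (Fin 2) (Fin 2) ℤ_[p]}
    (hg : g ∈ K0Z p m) (hh : h ∈ K0Z p m) : g * h ∈ K0Z p m := by
  refine ⟨?_, ?_⟩
  · rw [Matrix.det_mul]; exact hg.1.mul hh.1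
  · rw [entry_mul]
    exact dvd_add (Dvd.dvd.mul_right hg.2 _) (Dvd.dvd.mul_left hh.2 _)

lemma K0Z_inv {m : ℕ} {g : Matrix (Fin 2) (Fin 2) ℤ_[p]}
    (hg : g ∈ K0Z p m) : g⁻¹ ∈ K0Z p m ∧ g⁻¹ * g = 1 ∧ g * g⁻¹ = 1 := by
  have h1 : g⁻¹ * g = 1 := Matrix.nonsing_inv_mul g hg.1
  have h2 : g * g⁻¹ = 1 := Matrix.mul_nonsing_inv g hg.1
  refine ⟨⟨?_, ?_⟩, h1, h2⟩
  · have : g⁻¹.det * g.det = 1 := by rw [← Matrix.det_mul, h1, Matrix.det_one]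
    exact IsUnit.of_mul_eq_one _ this
  · rw [Matrix.inv_def, Matrix.adjugate_fin_two]
    simp only [Matrix.smul_apply, Matrix.cons_val', Matrix.cons_val_zero, Matrix.empty_val',
        Matrix.cons_val_fin_one, Matrix.cons_val_one, Matrix.head_cons, Matrix.head_fin_const]
    exact Dvd.dvd.mul_left (Dvd.dvd.neg_right hg.2) _
end

section
variable (p : ℕ) [Fact p.Prime]

lemma unit_entries {m : ℕ} (hm : 1 ≤ m) {g : Matrix (Fin 2) (Fin 2) ℤ_[p]}
    (hg : g ∈ K0Z p m) : IsUnit (g 0 0) ∧ IsUnit (g 1 1) := by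
  obtain ⟨hdet, hdvd⟩ := hg
  have hp : (p:ℤ_[p]) ∣ g 1 0 := dvd_trans (dvd_pow_self _ (by omega)) hdvd
  have hd : ¬ (p:ℤ_[p]) ∣ g.det := (unit_iff_not_dvd p _).mp hdet
  rw [Matrix.det_fin_two] at hd
  constructor
  · rw [unit_iff_not_dvd]
    intro h
    exact hd (dvd_sub (h.mul_right _) (hp.mul_left _))
  · rw [unit_iff_not_dvd]
    intro h
    exact hd (dvd_sub (h.mul_left _) (hp.mul_left _))

lemma mem_dCoset_iff {n j : ℕ} (hj1 : 1 ≤ j) (hjn : j < n)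
    (h : Matrix (Fin 2) (Fin 2) ℤ_[p]) :
    h ∈ dCosetZ p (K0Z p n) !![1, 0; (p : ℤ_[p]) ^ j, 1] ↔
      IsUnit h.det ∧ (p:ℤ_[p])^j ∣ h 1 0 ∧ ¬ (p:ℤ_[p])^(j+1) ∣ h 1 0 := by
  have hpj : (p:ℤ_[p])^j ≠ 0 := pow_ne_zero _ (Nat.cast_ne_zero.mpr (Fact.out : p.Prime).pos.ne')
  constructor
  · rintro ⟨k1, hk1, k2, hk2, rfl⟩
    have hn1 : 1 ≤ n := by omega
    have hu1 := unit_entries p hn1 hk1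
    have hu2 := unit_entries p hn1 hk2
    refine ⟨?_, ?_, ?_⟩
    · simp only [Matrix.det_mul]
      have : Matrix.det !![1, 0; (p : ℤ_[p]) ^ j, 1] = 1 := by
        rw [Matrix.det_fin_two_of]; ring
      rw [this]
      exact (hk1.1.mul isUnit_one).mul hk2.1
    all_goals {
      have he : (k1 * !![1, 0; (p : ℤ_[p]) ^ j, 1] * k2) 1 0
          = k1 1 1 * k2 0 0 * (p:ℤ_[p])^j + (k1 1 0 * k2 0 0 + k1 1 1 * k2 1 0) := by
        rw [entry_mul, entry_mul, entry_mul]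
        simp [Matrix.cons_val_zero, Matrix.cons_val_one]
        ring
      rw [he]
      first
      | exact dvd_add (Dvd.dvd.mul_left dvd_rfl _)
          (dvd_add ((dvd_trans (pow_dvd_pow _ hjn.le) hk1.2).mul_right _)
            ((dvd_trans (pow_dvd_pow _ hjn.le) hk2.2).mul_left _))
      | { intro hdvd
          have h2 : (p:ℤ_[p])^(j+1) ∣ (k1 1 0 * k2 0 0 + k1 1 1 * k2 1 0) :=
            dvd_add ((dvd_trans (pow_dvd_pow _ (by omega)) hk1.2).mul_right _)
              ((dvd_trans (pow_dvd_pow _ (by omega)) hk2.2).mul_left _)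
          have h3 : (p:ℤ_[p])^(j+1) ∣ k1 1 1 * k2 0 0 * (p:ℤ_[p])^j := by
            have := dvd_sub hdvd h2
            rwa [add_sub_cancel_right] at this
          rw [pow_succ, mul_comm ((p:ℤ_[p])^j) (p:ℤ_[p])] at h3
          have h4 : (p:ℤ_[p]) ∣ k1 1 1 * k2 0 0 := by
            have := (mul_dvd_mul_iff_right hpj).mp h3
            exact this
          exact (unit_iff_not_dvd p _).mp (hu1.2.mul hu2.1) h4 }
    }
  · rintro ⟨hdet, hdvd, hnot⟩
    have hmem : h ∈ K0Z p j := ⟨hdet, hdvd⟩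
    have ha : IsUnit (h 0 0) := (unit_entries p hj1 hmem).1
    obtain ⟨e, hc⟩ := hdvd
    have he : IsUnit e := by
      rw [unit_iff_not_dvd]
      intro ⟨f, hf⟩
      exact hnot ⟨f, by rw [hc, hf, pow_succ]; ring⟩
    obtain ⟨ai, hai⟩ := ha.exists_right_inv
    obtain ⟨ei, hei⟩ := he.exists_right_inv
    have hai' : IsUnit ai := IsUnit.of_mul_eq_one (h 0 0) (by rwa [mul_comm] at hai)
    have hei' : IsUnit ei := IsUnit.of_mul_eq_one e (by rwa [mul_comm] at hei)
    refine ⟨!![h 0 0 * ei, 0; 0, 1], ⟨?_, ?_⟩,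
      !![(e*ai) * h 0 0, (e*ai) * h 0 1; 0, h 1 1 - (h 1 0 * ai) * h 0 1], ⟨?_, ?_⟩, ?_⟩
    · rw [Matrix.det_fin_two_of]
      have : h 0 0 * ei * 1 - 0 * 0 = h 0 0 * ei := by ring
      rw [this]
      exact ha.mul hei'
    · simp
    · rw [Matrix.det_fin_two_of]
      have hd2 : e * ai * h 0 0 * (h 1 1 - h 1 0 * ai * h 0 1) - e * ai * h 0 1 * 0
          = (e * ai) * h.det := by
        rw [Matrix.det_fin_two]
        linear_combination (-(e * ai * h 0 1 * h 1 0)) * hai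
      rw [hd2]
      exact (he.mul hai').mul hdet
    · simp
    · ext i j
      fin_cases i <;> fin_cases j <;>
        simp [Matrix.mul_fin_two, Matrix.cons_val_zero, Matrix.cons_val_one]
      · linear_combination (-(h 0 0 * e * ei)) * hai - h 0 0 * hei
      · linear_combination (-(h 0 1 * e * ei)) * hai - h 0 1 * hei
      · linear_combination hc - ((p:ℤ_[p])^j*e) * hai
      · linear_combination (ai * h 0 1) * hc
end
section
variable (p : ℕ) [Fact p.Prime]

lemma Yfun_eq {n r : ℕ} (hn : 2 ≤ n) (hr1 : 1 ≤ r) (hrn : r ≤ n) :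
    Yfun p n r = Set.indicator (K0Z p r) (fun _ => (1 : ℂ)) := by
  funext h
  unfold Yfun onefun Vfun
  by_cases hK : h ∈ K0Z p r
  · rw [Set.indicator_of_mem hK]
    by_cases hN : (p:ℤ_[p])^n ∣ h 1 0
    · rw [Set.indicator_of_mem (show h ∈ K0Z p n from ⟨hK.1, hN⟩)]
      have : ∀ j ∈ Finset.Icc r (n-1),
          Set.indicator (dCosetZ p (K0Z p n) !![1, 0; (p : ℤ_[p]) ^ j, 1])
            (fun _ => (1:ℂ)) h = 0 := by
        intro j hj
        rw [Finset.mem_Icc] at hj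
        apply Set.indicator_of_notMem
        rw [mem_dCoset_iff p (le_trans hr1 hj.1) (by omega)]
        rintro ⟨-, -, hnd⟩
        exact hnd (dvd_trans (pow_dvd_pow _ (by omega)) hN)
      rw [Finset.sum_congr rfl this, Finset.sum_const_zero, add_zero]
    · -- exact valuation j = findGreatest
      classical
      set P : ℕ → Prop := fun k => (p:ℤ_[p])^k ∣ h 1 0 with hP
      set j := Nat.findGreatest P n with hj
      have hPr : P r := hK.2
      have hjr : r ≤ j := Nat.le_findGreatest hrn hPr
      have hPj : P j := Nat.findGreatest_spec (m := r) hrn hPr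
      have hjn : j < n := by
        rcases Nat.lt_or_ge j n with h' | h'
        · exact h'
        · exact absurd (dvd_trans (pow_dvd_pow _ h') hPj) hN
      have hnotj : ¬ P (j+1) := Nat.findGreatest_is_greatest (Nat.lt_succ_self j) (by omega)
      rw [Set.indicator_of_notMem (fun hc => hN hc.2)]
      rw [Finset.sum_eq_single_of_mem j (Finset.mem_Icc.mpr ⟨hjr, by omega⟩)]
      · rw [Set.indicator_of_mem]
        · ring
        · rw [mem_dCoset_iff p (by omega) hjn]
          exact ⟨hK.1, hPj, hnotj⟩
      · intro b hb hbj
        rw [Finset.mem_Icc] at hb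
        apply Set.indicator_of_notMem
        rw [mem_dCoset_iff p (by omega) (by omega)]
        rintro ⟨-, hd1, hd2⟩
        rcases Nat.lt_or_ge b j with h' | h'
        · exact hd2 (dvd_trans (pow_dvd_pow _ (by omega)) hPj)
        · exact hnotj (dvd_trans (pow_dvd_pow _ (by omega)) hd1)
  · rw [Set.indicator_of_notMem hK]
    rw [Set.indicator_of_notMem (fun hc => hK (K0Z_subset p hrn hc))]
    rw [zero_add]
    apply Finset.sum_eq_zero
    intro j hj
    rw [Finset.mem_Icc] at hj
    apply Set.indicator_of_notMem
    rw [mem_dCoset_iff p (by omega) (by omega)]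
    rintro ⟨hu, hd, -⟩
    exact hK ⟨hu, dvd_trans (pow_dvd_pow _ (by omega)) hd⟩
end

section
variable (p : ℕ) [Fact p.Prime]

abbrev MZ (p : ℕ) [Fact p.Prime] := Matrix (Fin 2) (Fin 2) ℤ_[p]

lemma measSet_K0Z (m : ℕ) : MeasurableSet[borel (MZ p)] (K0Z p m) := by
  letI := borel (MZ p)
  haveI : BorelSpace (MZ p) := ⟨rfl⟩
  have h1 : IsClosed {g : MZ p | ‖g.det‖ = 1} :=
    isClosed_eq (continuous_norm.comp (continuous_id.matrix_det)) continuous_const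
  have h2 : IsClosed {g : MZ p | ‖g 1 0‖ ≤ (p:ℝ)^(-(m:ℤ))} :=
    isClosed_le (continuous_norm.comp (((continuous_apply (0:Fin 2)).comp
      (continuous_apply (1:Fin 2))))) continuous_const
  have : K0Z p m = {g : MZ p | ‖g.det‖ = 1} ∩ {g : MZ p | ‖g 1 0‖ ≤ (p:ℝ)^(-(m:ℤ))} := by
    ext g
    simp only [K0Z, Set.mem_setOf_eq, Set.mem_inter_iff]
    rw [PadicInt.isUnit_iff, pdvd_iff]
  rw [this]
  exact (h1.measurableSet).inter (h2.measurableSet)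

lemma cont_mul_left (a : MZ p) : Continuous (fun g : MZ p => a * g) :=
  continuous_const.mul continuous_id

lemma measure_preimage_mul [mM : MeasurableSpace (MZ p)]
    (hB : mM = borel (MZ p)) (μ : Measure (MZ p))
    (hinv : ∀ a : MZ p, IsUnit a.det → Measure.map (fun g => a * g) μ = μ)
    {a : MZ p} (ha : IsUnit a.det) {S : Set (MZ p)} (hS : MeasurableSet S) :
    μ ((fun g => a * g) ⁻¹' S) = μ S := by
  subst hB
  letI := borel (MZ p)
  haveI : BorelSpace (MZ p) := ⟨rfl⟩
  have hmeas : Measurable (fun g : MZ p => a * g) := (cont_mul_left p a).measurable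
  conv_rhs => rw [← hinv a ha]
  rw [Measure.map_apply hmeas hS]
end

section
variable (p : ℕ) [Fact p.Prime]

lemma yt_mem_K0Z (l : ℕ) (c : ℤ_[p]) (hc : (p:ℤ_[p])^l ∣ c) :
    !![1, 0; c, 1] ∈ K0Z p l := by
  constructor
  · rw [Matrix.det_fin_two_of]
    simp
  · simpa using hc

lemma yt_mul (c d : ℤ_[p]) : !![1, 0; c, 1] * !![1, 0; d, 1] = !![(1:ℤ_[p]), 0; c + d, 1] := by
  rw [Matrix.mul_fin_two]
  congr 1 <;> ring_nf

lemma measure_K0Z [mM : MeasurableSpace (MZ p)] (hB : mM = borel (MZ p))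
    (μ : Measure (MZ p)) {n : ℕ}
    (hnormal : μ (K0Z p n) = 1)
    (hinv : ∀ a : MZ p, IsUnit a.det → Measure.map (fun g => a * g) μ = μ)
    {l : ℕ} (hl : 1 ≤ l) (hln : l ≤ n) :
    μ (K0Z p l) = (p : ENNReal) ^ (n - l) := by
  classical
  set m := n - l with hm
  have hpow : (p:ℤ_[p])^n = (p:ℤ_[p])^l * (p:ℤ_[p])^m := by
    rw [← pow_add]; congr 1; omega
  set C : ℕ → Set (MZ p) :=
    fun t => (fun g => !![1, 0; -((t:ℤ_[p]) * (p:ℤ_[p])^l), 1] * g) ⁻¹' (K0Z p n) with hC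
  have hdet_yt : ∀ c : ℤ_[p], IsUnit (Matrix.det !![1, 0; c, 1]) := by
    intro c; rw [Matrix.det_fin_two_of]; simp
  -- each coset has measure 1
  have hCmeas : ∀ t, MeasurableSet (C t) := by
    intro t
    subst hB
    letI := borel (MZ p)
    haveI : BorelSpace (MZ p) := ⟨rfl⟩
    exact (cont_mul_left p _).measurable (measSet_K0Z p n)
  have hCone : ∀ t, μ (C t) = 1 := by
    intro t
    rw [hC]
    rw [measure_preimage_mul p hB μ hinv (hdet_yt _) (hB ▸ measSet_K0Z p n)]
    exact hnormal
  -- union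
  have hunion : K0Z p l = ⋃ t ∈ Finset.range (p ^ m), C t := by
    ext g
    constructor
    · intro hg
      have ha : IsUnit (g 0 0) := (unit_entries p hl hg).1
      obtain ⟨e, hc⟩ := hg.2
      obtain ⟨ai, hai⟩ := ha.exists_right_inv
      set t := (e * ai).appr m with ht
      have htlt : t < p ^ m := PadicInt.appr_lt _ _
      have hspec : (p:ℤ_[p])^m ∣ (e * ai) - t :=
        Ideal.mem_span_singleton.mp (PadicInt.appr_spec m (e * ai))
      obtain ⟨w, hw⟩ := hspec
      refine Set.mem_biUnion (Finset.mem_range.mpr htlt) ?_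
      refine ⟨?_, ?_⟩
      · rw [Matrix.det_mul, Matrix.det_fin_two_of]
        have h1 : (1:ℤ_[p]) * 1 - 0 * -((t:ℤ_[p]) * (p:ℤ_[p])^l) = 1 := by ring
        rw [h1, one_mul]
        exact hg.1
      · beta_reduce
        rw [entry_mul]
        simp
        refine ⟨w * g 0 0, ?_⟩
        rw [hpow]
        linear_combination hc + ((p:ℤ_[p])^l * g 0 0) * hw - ((p:ℤ_[p])^l * e) * hai
    · intro hg
      simp only [Set.mem_iUnion] at hg
      obtain ⟨t, -, hgt⟩ := hg
      have hk : !![1, 0; -((t:ℤ_[p]) * (p:ℤ_[p])^l), 1] * g ∈ K0Z p n := hgt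
      have : g = !![1, 0; ((t:ℤ_[p]) * (p:ℤ_[p])^l), 1] *
          (!![1, 0; -((t:ℤ_[p]) * (p:ℤ_[p])^l), 1] * g) := by
        rw [← mul_assoc, yt_mul]
        have h1 : ((t:ℤ_[p]) * (p:ℤ_[p])^l) + -((t:ℤ_[p]) * (p:ℤ_[p])^l) = 0 := by ring
        rw [h1]
        have : !![(1:ℤ_[p]), 0; 0, 1] = (1 : MZ p) := by
          ext i j; fin_cases i <;> fin_cases j <;> simp [Matrix.one_apply]
        rw [this, one_mul]
      rw [this]
      exact K0Z_mul p (yt_mem_K0Z p l _ (Dvd.dvd.mul_left dvd_rfl _))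
        (K0Z_subset p hln hk)
  -- disjoint
  have hdisj : (Finset.range (p ^ m) : Set ℕ).PairwiseDisjoint C := by
    intro t ht t' ht' htt'
    simp only [Finset.coe_range, Set.mem_Iio] at ht ht'
    rw [Function.onFun, Set.disjoint_left]
    intro g hgt hgt'
    apply htt'
    have h1 := hgt.2
    have h2 := hgt'.2
    beta_reduce at h1 h2
    rw [entry_mul] at h1 h2
    simp at h1 h2
    have hsub : (p:ℤ_[p])^n ∣ ((t':ℤ_[p]) - t) * (p:ℤ_[p])^l * g 0 0 := by
      have := dvd_sub h1 h2
      have heq : -((t:ℤ_[p]) * (p:ℤ_[p])^l * g 0 0) + g 1 0 -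
          (-((t':ℤ_[p]) * (p:ℤ_[p])^l * g 0 0) + g 1 0)
          = ((t':ℤ_[p]) - t) * (p:ℤ_[p])^l * g 0 0 := by ring
      rwa [heq] at this
    -- g 0 0 is a unit
    have hgl : g ∈ K0Z p l := by
      rw [hunion]; exact Set.mem_biUnion (Finset.mem_range.mpr ht) hgt
    have ha : IsUnit (g 0 0) := (unit_entries p hl hgl).1
    obtain ⟨ai, hai⟩ := ha.exists_right_inv
    obtain ⟨w, hw⟩ := hsub
    have hdvd2 : (p:ℤ_[p])^l * ((t':ℤ_[p]) - t) = (p:ℤ_[p])^l * ((p:ℤ_[p])^m * (w * ai)) := by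
      rw [hpow] at hw
      linear_combination ai * hw + (-((t':ℤ_[p]) - (t:ℤ_[p])) * (p:ℤ_[p])^l) * hai
    have hpl : ((p:ℤ_[p])^l) ≠ 0 :=
      pow_ne_zero _ (Nat.cast_ne_zero.mpr (Fact.out : p.Prime).pos.ne')
    have hdvd3 : (p:ℤ_[p])^m ∣ ((t':ℤ_[p]) - t) := ⟨w * ai, mul_left_cancel₀ hpl hdvd2⟩
    -- integer conclusion
    have hint : ((p:ℤ))^m ∣ ((t':ℤ) - t) := by
      have : ((((t':ℤ) - t) : ℤ) : ℤ_[p]) = ((t':ℤ_[p]) - t) := by push_cast; ring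
      rw [← PadicInt.norm_int_le_pow_iff_dvd]
      rw [this]
      rw [← pdvd_iff]
      exact hdvd3
    rcases eq_or_ne t t' with h | h
    · exact h
    · exfalso
      have hne : ((t':ℤ) - t) ≠ 0 := by
        intro hcon; apply h; omega
      have hle := Int.le_of_dvd (abs_pos.mpr hne) ((dvd_abs _ _).mpr hint)
      have hcast : ((p^m : ℕ) : ℤ) = (p:ℤ)^m := by push_cast; ring
      have h1' : (t:ℤ) < (p:ℤ)^m := by rw [← hcast]; exact_mod_cast ht
      have h2' : (t':ℤ) < (p:ℤ)^m := by rw [← hcast]; exact_mod_cast ht'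
      have habs : |((t':ℤ) - t)| < (p:ℤ)^m := by rw [abs_lt]; omega
      omega
  rw [hunion, measure_biUnion_finset hdisj (fun t _ => hCmeas t)]
  rw [Finset.sum_congr rfl (fun t _ => hCone t), Finset.sum_const, Finset.card_range]
  simp [nsmul_eq_mul]
end

section
variable (p : ℕ) [Fact p.Prime]

lemma conv_eval [mM : MeasurableSpace (MZ p)] (hB : mM = borel (MZ p))
    (μ : Measure (MZ p)) {n : ℕ}
    (hnormal : μ (K0Z p n) = 1)
    (hinv : ∀ a : MZ p, IsUnit a.det → Measure.map (fun g => a * g) μ = μ)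
    {l r : ℕ} (hl : 1 ≤ l) (hlr : l ≤ r) (hrn : r ≤ n) (h : MZ p) :
    (∫ g, Set.indicator (K0Z p r) (fun _ => (1:ℂ)) g *
        Set.indicator (K0Z p l) (fun _ => (1:ℂ)) (g⁻¹ * h) ∂μ)
      = (p:ℂ)^(n-r) * Set.indicator (K0Z p l) (fun _ => (1:ℂ)) h ∧
    (∫ g, Set.indicator (K0Z p l) (fun _ => (1:ℂ)) g *
        Set.indicator (K0Z p r) (fun _ => (1:ℂ)) (g⁻¹ * h) ∂μ)
      = (p:ℂ)^(n-r) * Set.indicator (K0Z p l) (fun _ => (1:ℂ)) h := by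
  have hr1 : 1 ≤ r := le_trans hl hlr
  have hsub : K0Z p r ⊆ K0Z p l := K0Z_subset p hlr
  have hμr : μ (K0Z p r) = (p:ENNReal)^(n-r) :=
    measure_K0Z p hB μ hnormal hinv hr1 hrn
  have hmeasr : MeasurableSet (K0Z p r) := hB ▸ measSet_K0Z p r
  have htoreal : ((μ (K0Z p r)).toReal : ℝ) • (1:ℂ) = (p:ℂ)^(n-r) := by
    rw [hμr]
    rw [Complex.real_smul, mul_one]
    rw [show ((p:ENNReal)^(n-r)) = (((p^(n-r):ℕ)):ENNReal) by push_cast; ring]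
    rw [ENNReal.toReal_natCast]
    push_cast
    ring
  by_cases hh : h ∈ K0Z p l
  · have hhd := hh.1
    have hhinv := K0Z_inv p hh
    constructor
    · have e1 : (fun g : MZ p => Set.indicator (K0Z p r) (fun _ => (1:ℂ)) g *
          Set.indicator (K0Z p l) (fun _ => (1:ℂ)) (g⁻¹ * h))
          = Set.indicator (K0Z p r) (fun _ => (1:ℂ)) := by
        funext g
        by_cases hg : g ∈ K0Z p r
        · have hK := K0Z_inv p hg
          have hmem : g⁻¹ * h ∈ K0Z p l := K0Z_mul p (hsub hK.1) hh
          rw [Set.indicator_of_mem hg, Set.indicator_of_mem hmem, mul_one]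
        · rw [Set.indicator_of_notMem hg, zero_mul]
      rw [e1, integral_indicator_const _ hmeasr, measureReal_def, htoreal, Set.indicator_of_mem hh, mul_one]
    · have e2 : (fun g : MZ p => Set.indicator (K0Z p l) (fun _ => (1:ℂ)) g *
          Set.indicator (K0Z p r) (fun _ => (1:ℂ)) (g⁻¹ * h))
          = Set.indicator ((fun g : MZ p => h⁻¹ * g) ⁻¹' (K0Z p r)) (fun _ => (1:ℂ)) := by
        funext g
        by_cases hg2 : h⁻¹ * g ∈ K0Z p r
        · have hgeq : g = h * (h⁻¹ * g) := by
            rw [← mul_assoc, Matrix.mul_nonsing_inv h hhd, one_mul]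
          have hgl : g ∈ K0Z p l := by
            rw [hgeq]; exact K0Z_mul p hh (hsub hg2)
          have hinvg : g⁻¹ * h = (h⁻¹ * g)⁻¹ := by
            conv_lhs => rw [hgeq]
            rw [Matrix.mul_inv_rev, mul_assoc, Matrix.nonsing_inv_mul h hhd, mul_one]
          have hmem : g⁻¹ * h ∈ K0Z p r := by
            rw [hinvg]; exact (K0Z_inv p hg2).1
          rw [Set.indicator_of_mem hgl, Set.indicator_of_mem hmem,
            Set.indicator_of_mem (Set.mem_preimage.mpr hg2), mul_one]
        · rw [Set.indicator_of_notMem (fun hc => hg2 (Set.mem_preimage.mp hc))]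
          by_cases hgl : g ∈ K0Z p l
          · by_cases hgr : g⁻¹ * h ∈ K0Z p r
            · exfalso
              apply hg2
              have hheq : h = g * (g⁻¹ * h) := by
                rw [← mul_assoc, Matrix.mul_nonsing_inv g hgl.1, one_mul]
              have : h⁻¹ * g = (g⁻¹ * h)⁻¹ := by
                conv_lhs => rw [hheq]
                rw [Matrix.mul_inv_rev, mul_assoc, Matrix.nonsing_inv_mul g hgl.1, mul_one]
              rw [this]
              exact (K0Z_inv p hgr).1
            · rw [Set.indicator_of_notMem hgr, mul_zero]
          · rw [Set.indicator_of_notMem hgl, zero_mul]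
      have hmeaspre : MeasurableSet ((fun g : MZ p => h⁻¹ * g) ⁻¹' (K0Z p r)) := by
        subst hB
        letI := borel (MZ p)
        haveI : BorelSpace (MZ p) := ⟨rfl⟩
        exact (cont_mul_left p _).measurable (measSet_K0Z p r)
      have hμpre : μ ((fun g : MZ p => h⁻¹ * g) ⁻¹' (K0Z p r)) = μ (K0Z p r) :=
        measure_preimage_mul p hB μ hinv hhinv.1.1 hmeasr
      rw [e2, integral_indicator_const _ hmeaspre, measureReal_def, hμpre, htoreal,
        Set.indicator_of_mem hh, mul_one]
  · have hzero : ∀ (A B : Set (MZ p)), A ⊆ K0Z p l → B ⊆ K0Z p l →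
        (fun g : MZ p => Set.indicator A (fun _ => (1:ℂ)) g *
          Set.indicator B (fun _ => (1:ℂ)) (g⁻¹ * h)) = fun _ => (0:ℂ) := by
      intro A B hA hB2
      funext g
      by_cases hg : g ∈ A
      · by_cases hg2 : g⁻¹ * h ∈ B
        · exfalso
          apply hh
          have hheq : h = g * (g⁻¹ * h) := by
            rw [← mul_assoc, Matrix.mul_nonsing_inv g (hA hg).1, one_mul]
          rw [hheq]
          exact K0Z_mul p (hA hg) (hB2 hg2)
        · rw [Set.indicator_of_notMem hg2, mul_zero]
      · rw [Set.indicator_of_notMem hg, zero_mul]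
    rw [Set.indicator_of_notMem hh, mul_zero]
    constructor
    · rw [hzero _ _ hsub (le_refl _ : K0Z p l ⊆ K0Z p l), integral_zero]
    · rw [hzero _ _ (le_refl _ : K0Z p l ⊆ K0Z p l) hsub, integral_zero]
end

/-- `Y_{n-r} * Y_{n-r} = p^r Y_{n-r}` for `0 ≤ r ≤ n-1`, and
`Y_r * Y_l = p^{n-r} Y_l = Y_l * Y_r` whenever `r ≥ l`. -/
theorem stmt8 (p : ℕ) [Fact p.Prime] (n : ℕ) (hn : 2 ≤ n)
    [mM : MeasurableSpace (Matrix (Fin 2) (Fin 2) ℤ_[p])]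
    (hB : mM = borel (Matrix (Fin 2) (Fin 2) ℤ_[p]))
    (μ : Measure (Matrix (Fin 2) (Fin 2) ℤ_[p])) (hμ : IsHaarK p n μ) :
    (∀ r, r ≤ n - 1 → ∀ h,
      convZ p μ (Yfun p n (n - r)) (Yfun p n (n - r)) h =
        (p : ℂ) ^ r * Yfun p n (n - r) h) ∧
    (∀ r l, 1 ≤ l → l ≤ r → r ≤ n → ∀ h,
      convZ p μ (Yfun p n r) (Yfun p n l) h = (p : ℂ) ^ (n - r) * Yfun p n l h ∧
      convZ p μ (Yfun p n l) (Yfun p n r) h = (p : ℂ) ^ (n - r) * Yfun p n l h) := by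
  have key : ∀ r l, 1 ≤ l → l ≤ r → r ≤ n → ∀ h,
      convZ p μ (Yfun p n r) (Yfun p n l) h = (p:ℂ)^(n-r) * Yfun p n l h ∧
      convZ p μ (Yfun p n l) (Yfun p n r) h = (p:ℂ)^(n-r) * Yfun p n l h := by
    intro r l hl hlr hrn h
    have hr1 : 1 ≤ r := le_trans hl hlr
    rw [Yfun_eq p hn hl (le_trans hlr hrn), Yfun_eq p hn hr1 hrn]
    unfold convZ
    have hind : ∀ a : Matrix (Fin 2) (Fin 2) ℤ_[p], IsUnit a.det →
        Measure.map (fun g => a * g) μ = μ := hμ.left_inv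
    exact conv_eval p hB μ hμ.normal hind hl hlr hrn h
  refine ⟨?_, fun r l hl hlr hrn h => key r l hl hlr hrn h⟩
  intro r hr h
  have h1 := (key (n-r) (n-r) (by omega) le_rfl (by omega) h).1
  rw [h1]
  have hexp : n - (n - r) = r := by omega
  rw [hexp]
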